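/- For n ≥ p ≥ 2, the number of order-preserving partial isometries of {1,...,n} with domain of size exactly p equals ((2n − p + 1)/(p + 1)) · C(n, p). -/

import Mathlib

open Finset

/-- `G` is the graph of a partial isometry of the chain `{1,...,n}`:
a functional, injective relation contained in `{1,...,n} × {1,...,n}`
that preserves distances. -/
def IsPartialIsometryGraph (n : ℕ) (G : Finset (ℕ × ℕ)) : Prop :=
  G ⊆ Finset.Icc 1 n ×ˢ Finset.Icc 1 n ∧
  (∀ p ∈ G, ∀ q ∈ G, p.1 = q.1 → p = q) ∧
  (∀ p ∈ G, ∀ q ∈ G, p.2 = q.2 → p = q) ∧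
  (∀ p ∈ G, ∀ q ∈ G, ((p.1 : ℤ) - q.1).natAbs = ((p.2 : ℤ) - q.2).natAbs)

/-- The graph `G` is order-preserving. -/
def IsOrderPreservingGraph (G : Finset (ℕ × ℕ)) : Prop :=
  ∀ p ∈ G, ∀ q ∈ G, p.1 ≤ q.1 → p.2 ≤ q.2

def phi (k : ℤ) (D : Finset ℕ) : Finset (ℕ × ℕ) :=
  D.image (fun x => (x, ((x : ℤ) + k).toNat))

noncomputable def TT (n p : ℕ) : Finset (Finset ℕ × ℤ) :=
  (((Finset.Icc 1 n).powersetCard p) ×ˢ Finset.Icc (1 - (n : ℤ)) (n : ℤ)).filter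
    (fun Dk => ∀ x ∈ Dk.1, 1 ≤ (x : ℤ) + Dk.2 ∧ (x : ℤ) + Dk.2 ≤ (n : ℤ))

lemma mem_TT {n p : ℕ} {D : Finset ℕ} {k : ℤ} :
    (D, k) ∈ TT n p ↔ (D ⊆ Finset.Icc 1 n ∧ D.card = p) ∧
      (1 - (n : ℤ) ≤ k ∧ k ≤ (n : ℤ)) ∧
      ∀ x ∈ D, 1 ≤ (x : ℤ) + k ∧ (x : ℤ) + k ≤ (n : ℤ) := by
  simp [TT, Finset.mem_powersetCard, Finset.mem_filter, Finset.mem_product, and_assoc]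

lemma mem_phi {k : ℤ} {D : Finset ℕ} {a b : ℕ} :
    (a, b) ∈ phi k D ↔ a ∈ D ∧ ((a : ℤ) + k).toNat = b := by
  simp only [phi, Finset.mem_image, Prod.mk.injEq]
  constructor
  · rintro ⟨x, hx, rfl, rfl⟩; exact ⟨hx, rfl⟩
  · rintro ⟨ha, rfl⟩; exact ⟨a, ha, rfl, rfl⟩

lemma image_fst_phi (k : ℤ) (D : Finset ℕ) : (phi k D).image Prod.fst = D := by
  simp [phi, Finset.image_image, Function.comp_def]

lemma setEq (n p : ℕ) (hp : 2 ≤ p) :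
    {G : Finset (ℕ × ℕ) | IsPartialIsometryGraph n G ∧ IsOrderPreservingGraph G ∧
      (G.image Prod.fst).card = p}
    = ↑((TT n p).image (fun Dk => phi Dk.2 Dk.1)) := by
  ext G
  simp only [Set.mem_setOf_eq, Finset.coe_image, Set.mem_image, Finset.mem_coe]
  constructor
  · rintro ⟨⟨hsub, hfun, hinj, hiso⟩, hord, hcard⟩
    -- G nonempty
    have hDne : (G.image Prod.fst).Nonempty := by
      rw [← Finset.card_pos, hcard]; omega
    obtain ⟨a0, ha0D⟩ := hDne
    obtain ⟨ab, habG, hab1⟩ := Finset.mem_image.mp ha0D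
    set k : ℤ := (ab.2 : ℤ) - (ab.1 : ℤ) with hk
    have hkey : ∀ pq ∈ G, (pq.2 : ℤ) - (pq.1 : ℤ) = k := by
      intro pq hpq
      have hiso' := hiso pq hpq ab habG
      have h1 := hord pq hpq ab habG
      have h2 := hord ab habG pq hpq
      rcases le_total pq.1 ab.1 with h | h
      · have := h1 h; omega
      · have := h2 h; omega
    have hmem : (G.image Prod.fst, k) ∈ TT n p := by
      rw [mem_TT]
      have hbd : ∀ x ∈ G.image Prod.fst, 1 ≤ (x : ℤ) + k ∧ (x : ℤ) + k ≤ (n : ℤ) ∧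
          1 ≤ x ∧ x ≤ n := by
        intro x hx
        obtain ⟨pq, hpq, rfl⟩ := Finset.mem_image.mp hx
        have h1 := hsub hpq
        rw [Finset.mem_product, Finset.mem_Icc, Finset.mem_Icc] at h1
        have h2 := hkey pq hpq
        omega
      refine ⟨⟨?_, hcard⟩, ?_, fun x hx => ⟨(hbd x hx).1, (hbd x hx).2.1⟩⟩
      · intro x hx
        have := hbd x hx
        rw [Finset.mem_Icc]; omega
      · have := hbd _ ha0D; omega
    refine ⟨(G.image Prod.fst, k), hmem, ?_⟩
    apply Finset.Subset.antisymm_iff.mpr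
    constructor
    · rintro ⟨a, b⟩ hpq
      rw [mem_phi] at hpq
      obtain ⟨h1, h2⟩ := hpq
      obtain ⟨qq, hqq, hq1⟩ := Finset.mem_image.mp h1
      have h3 := hkey qq hqq
      have : (a, b) = qq := by
        have hb : b = qq.2 := by omega
        exact Prod.ext (hq1.symm) hb
      rwa [this]
    · rintro ⟨a, b⟩ hpq
      have h2 := hkey (a, b) hpq
      rw [mem_phi]
      exact ⟨Finset.mem_image.mpr ⟨(a, b), hpq, rfl⟩, by simp at h2 ⊢; omega⟩
  · rintro ⟨⟨D, k⟩, hmem, rfl⟩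
    rw [mem_TT] at hmem
    obtain ⟨⟨hsub, hcard⟩, hkbd, hbd⟩ := hmem
    have hIcc : ∀ x ∈ D, 1 ≤ x ∧ x ≤ n := by
      intro x hx; have := hsub hx; rw [Finset.mem_Icc] at this; omega
    have key : ∀ pq ∈ phi k D, pq.1 ∈ D ∧ ((pq.1 : ℤ) + k).toNat = pq.2 := by
      rintro ⟨a, b⟩ hpq
      rw [mem_phi] at hpq
      exact hpq
    refine ⟨⟨?_, ?_, ?_, ?_⟩, ?_, by rw [image_fst_phi, hcard]⟩
    · intro pq hpq
      obtain ⟨h1, h2⟩ := key pq hpq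
      have h3 := hIcc _ h1
      have h4 := hbd _ h1
      rw [Finset.mem_product, Finset.mem_Icc, Finset.mem_Icc]
      omega
    · intro pq hpq qq hqq h
      obtain ⟨h1, h2⟩ := key pq hpq
      obtain ⟨h3, h4⟩ := key qq hqq
      exact Prod.ext h (by rw [← h2, ← h4, h])
    · intro pq hpq qq hqq h
      obtain ⟨h1, h2⟩ := key pq hpq
      obtain ⟨h3, h4⟩ := key qq hqq
      have h5 := hbd _ h1
      have h6 := hbd _ h3
      have : pq.1 = qq.1 := by omega
      exact Prod.ext this (by omega)
    · intro pq hpq qq hqq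
      obtain ⟨h1, h2⟩ := key pq hpq
      obtain ⟨h3, h4⟩ := key qq hqq
      have h5 := hbd _ h1
      have h6 := hbd _ h3
      omega
    · intro pq hpq qq hqq h
      obtain ⟨h1, h2⟩ := key pq hpq
      obtain ⟨h3, h4⟩ := key qq hqq
      have h5 := hbd _ h1
      have h6 := hbd _ h3
      omega

lemma mem_TT' {n p : ℕ} {Dk : Finset ℕ × ℤ} :
    Dk ∈ TT n p ↔ (Dk.1 ⊆ Finset.Icc 1 n ∧ Dk.1.card = p) ∧
      (1 - (n : ℤ) ≤ Dk.2 ∧ Dk.2 ≤ (n : ℤ)) ∧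
      ∀ x ∈ Dk.1, 1 ≤ (x : ℤ) + Dk.2 ∧ (x : ℤ) + Dk.2 ≤ (n : ℤ) := by
  obtain ⟨D, k⟩ := Dk
  exact mem_TT

lemma card_T0 (n p : ℕ) (hp : 2 ≤ p) (hn : p ≤ n) :
    ((TT n p).filter (fun Dk => Dk.2 = 0)).card = n.choose p := by
  have ht : ((Finset.Icc 1 n).powersetCard p).card = n.choose p := by
    rw [Finset.card_powersetCard]; simp
  rw [← ht]
  apply Finset.card_bij (i := fun Dk _ => Dk.1)
  · rintro ⟨D, k⟩ h
    rw [Finset.mem_filter, mem_TT'] at h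
    exact Finset.mem_powersetCard.mpr h.1.1
  · rintro ⟨D1, k1⟩ h1 ⟨D2, k2⟩ h2 heq
    rw [Finset.mem_filter] at h1 h2
    simp only at heq
    simp only [Prod.mk.injEq]
    exact ⟨heq, by have a := h1.2; have b := h2.2; simp only at a b; omega⟩
  · intro E hE
    rw [Finset.mem_powersetCard] at hE
    refine ⟨(E, 0), ?_, rfl⟩
    rw [Finset.mem_filter, mem_TT']
    refine ⟨⟨hE, ⟨by omega, by omega⟩, ?_⟩, rfl⟩
    intro x hx
    have := hE.1 hx
    rw [Finset.mem_Icc] at this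
    omega


lemma card_Tp (n p : ℕ) (hp : 2 ≤ p) (hn : p ≤ n) :
    ((TT n p).filter (fun Dk => 0 < Dk.2)).card = n.choose (p + 1) := by
  have ht : ((Finset.Icc 1 n).powersetCard (p+1)).card = n.choose (p+1) := by
    rw [Finset.card_powersetCard]; simp
  rw [← ht]
  apply Finset.card_bij (i := fun Dk h => insert ((Dk.1.max' (by
      rw [Finset.mem_filter, mem_TT'] at h
      exact Finset.card_pos.mp (by rw [h.1.1.2]; omega))) + Dk.2.toNat) Dk.1)
  · rintro ⟨D, k⟩ h
    rw [Finset.mem_filter, mem_TT'] at h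
    obtain ⟨⟨⟨hsub, hcard⟩, _, hbd⟩, hk⟩ := h
    simp only at hsub hcard hbd hk ⊢
    have hne : D.Nonempty := Finset.card_pos.mp (by omega)
    set M := D.max' hne with hM
    have hMD : M ∈ D := D.max'_mem hne
    have hMb := hbd M hMD
    have hM1 : 1 ≤ M := by have := hsub hMD; rw [Finset.mem_Icc] at this; omega
    have hnotmem : M + k.toNat ∉ D := by
      intro hc
      have := D.le_max' _ hc
      omega
    rw [Finset.mem_powersetCard]
    constructor
    · apply Finset.insert_subset
      · rw [Finset.mem_Icc]; omega
      · exact hsub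
    · rw [Finset.card_insert_of_notMem hnotmem, hcard]
  · rintro ⟨D1, k1⟩ h1 ⟨D2, k2⟩ h2 heq
    rw [Finset.mem_filter, mem_TT'] at h1 h2
    obtain ⟨⟨⟨hsub1, hcard1⟩, _, hbd1⟩, hk1⟩ := h1
    obtain ⟨⟨⟨hsub2, hcard2⟩, _, hbd2⟩, hk2⟩ := h2
    simp only at hsub1 hcard1 hbd1 hk1 hsub2 hcard2 hbd2 hk2 heq ⊢
    have hne1 : D1.Nonempty := Finset.card_pos.mp (by omega)
    have hne2 : D2.Nonempty := Finset.card_pos.mp (by omega)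
    set M1 := D1.max' hne1 with hM1d
    set M2 := D2.max' hne2 with hM2d
    set e1 := M1 + k1.toNat with he1
    set e2 := M2 + k2.toNat with he2
    have hlt1 : ∀ x ∈ D1, x < e1 := by
      intro x hx; have := D1.le_max' x hx; omega
    have hlt2 : ∀ x ∈ D2, x < e2 := by
      intro x hx; have := D2.le_max' x hx; omega
    have hee : e1 = e2 := by
      have m1 : e1 ∈ insert e2 D2 := by rw [← heq]; exact Finset.mem_insert_self _ _
      have m2 : e2 ∈ insert e1 D1 := by rw [heq]; exact Finset.mem_insert_self _ _
      rcases Finset.mem_insert.mp m1 with h | h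
      · exact h
      · rcases Finset.mem_insert.mp m2 with h' | h'
        · exact h'.symm
        · have := hlt2 e1 h; have := hlt1 e2 h'; omega
    have hD : D1 = D2 := by
      have n1 : e1 ∉ D1 := fun hc => absurd (hlt1 e1 hc) (by omega)
      have n2 : e2 ∉ D2 := fun hc => absurd (hlt2 e2 hc) (by omega)
      have : (insert e1 D1).erase e1 = (insert e2 D2).erase e2 := by rw [heq, hee]
      rwa [Finset.erase_insert n1, Finset.erase_insert n2] at this
    simp only [Prod.mk.injEq]
    refine ⟨hD, ?_⟩
    subst hD
    have : M1 = M2 := rfl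
    omega
  · intro E hE
    rw [Finset.mem_powersetCard] at hE
    obtain ⟨hEsub, hEcard⟩ := hE
    have hEne : E.Nonempty := Finset.card_pos.mp (by omega)
    set M := E.max' hEne with hMd
    have hME : M ∈ E := E.max'_mem hEne
    set D := E.erase M with hDd
    have hDcard : D.card = p := by
      rw [hDd, Finset.card_erase_of_mem hME, hEcard]
      omega
    have hDne : D.Nonempty := Finset.card_pos.mp (by omega)
    set m := D.max' hDne with hmd
    have hmD : m ∈ D := D.max'_mem hDne
    have hmE : m ∈ E := Finset.mem_of_mem_erase hmD
    have hmM : m < M := by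
      have h1 := E.le_max' m hmE
      have h2 : m ≠ M := Finset.ne_of_mem_erase hmD
      omega
    have hMn : M ≤ n := by have := hEsub hME; rw [Finset.mem_Icc] at this; omega
    have hDsub : D ⊆ Finset.Icc 1 n := fun x hx => hEsub (Finset.mem_of_mem_erase hx)
    refine ⟨(D, (M : ℤ) - m), ?_, ?_⟩
    · rw [Finset.mem_filter, mem_TT']
      have h1lem : ∀ x ∈ D, 1 ≤ x ∧ x ≤ n := by
        intro x hx; have := hDsub hx; rw [Finset.mem_Icc] at this; omega
      refine ⟨⟨⟨hDsub, hDcard⟩, ⟨by omega, ?_⟩, ?_⟩, by simp; omega⟩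
      · simp only
        have := h1lem m hmD
        omega
      · intro x hx
        have h1 := h1lem x hx
        have h2 := D.le_max' x hx
        simp only
        omega
    · simp only
      have : ((M : ℤ) - m).toNat = M - m := by omega
      rw [this]
      have : m + (M - m) = M := by omega
      rw [← hmd, this, hDd, Finset.insert_erase hME]

lemma card_Tm (n p : ℕ) (hp : 2 ≤ p) (hn : p ≤ n) :
    ((TT n p).filter (fun Dk => Dk.2 < 0)).card = n.choose (p + 1) := by
  have ht : ((Finset.Icc 1 n).powersetCard (p+1)).card = n.choose (p+1) := by
    rw [Finset.card_powersetCard]; simp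
  rw [← ht]
  apply Finset.card_bij (i := fun Dk h => insert (((Dk.1.min' (by
      rw [Finset.mem_filter, mem_TT'] at h
      exact Finset.card_pos.mp (by rw [h.1.1.2]; omega)) : ℤ) + Dk.2).toNat) Dk.1)
  · rintro ⟨D, k⟩ h
    rw [Finset.mem_filter, mem_TT'] at h
    obtain ⟨⟨⟨hsub, hcard⟩, _, hbd⟩, hk⟩ := h
    simp only at hsub hcard hbd hk ⊢
    have hne : D.Nonempty := Finset.card_pos.mp (by omega)
    set M := D.min' hne with hM
    have hMD : M ∈ D := D.min'_mem hne
    have hMb := hbd M hMD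
    have hMn : M ≤ n := by have := hsub hMD; rw [Finset.mem_Icc] at this; omega
    have hnotmem : ((M : ℤ) + k).toNat ∉ D := by
      intro hc
      have := D.min'_le _ hc
      omega
    rw [Finset.mem_powersetCard]
    constructor
    · apply Finset.insert_subset
      · rw [Finset.mem_Icc]; omega
      · exact hsub
    · rw [Finset.card_insert_of_notMem hnotmem, hcard]
  · rintro ⟨D1, k1⟩ h1 ⟨D2, k2⟩ h2 heq
    rw [Finset.mem_filter, mem_TT'] at h1 h2
    obtain ⟨⟨⟨hsub1, hcard1⟩, _, hbd1⟩, hk1⟩ := h1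
    obtain ⟨⟨⟨hsub2, hcard2⟩, _, hbd2⟩, hk2⟩ := h2
    simp only at hsub1 hcard1 hbd1 hk1 hsub2 hcard2 hbd2 hk2 heq ⊢
    have hne1 : D1.Nonempty := Finset.card_pos.mp (by omega)
    have hne2 : D2.Nonempty := Finset.card_pos.mp (by omega)
    set M1 := D1.min' hne1 with hM1d
    set M2 := D2.min' hne2 with hM2d
    have hb1 := hbd1 M1 (D1.min'_mem hne1)
    have hb2 := hbd2 M2 (D2.min'_mem hne2)
    set e1 := ((M1 : ℤ) + k1).toNat with he1
    set e2 := ((M2 : ℤ) + k2).toNat with he2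
    have hlt1 : ∀ x ∈ D1, e1 < x := by
      intro x hx; have := D1.min'_le x hx; omega
    have hlt2 : ∀ x ∈ D2, e2 < x := by
      intro x hx; have := D2.min'_le x hx; omega
    have hee : e1 = e2 := by
      have m1 : e1 ∈ insert e2 D2 := by rw [← heq]; exact Finset.mem_insert_self _ _
      have m2 : e2 ∈ insert e1 D1 := by rw [heq]; exact Finset.mem_insert_self _ _
      rcases Finset.mem_insert.mp m1 with h | h
      · exact h
      · rcases Finset.mem_insert.mp m2 with h' | h'
        · exact h'.symm
        · have := hlt2 e1 h; have := hlt1 e2 h'; omega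
    have hD : D1 = D2 := by
      have n1 : e1 ∉ D1 := fun hc => absurd (hlt1 e1 hc) (by omega)
      have n2 : e2 ∉ D2 := fun hc => absurd (hlt2 e2 hc) (by omega)
      have : (insert e1 D1).erase e1 = (insert e2 D2).erase e2 := by rw [heq, hee]
      rwa [Finset.erase_insert n1, Finset.erase_insert n2] at this
    simp only [Prod.mk.injEq]
    refine ⟨hD, ?_⟩
    subst hD
    have : M1 = M2 := rfl
    omega
  · intro E hE
    rw [Finset.mem_powersetCard] at hE
    obtain ⟨hEsub, hEcard⟩ := hE
    have hEne : E.Nonempty := Finset.card_pos.mp (by omega)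
    set M := E.min' hEne with hMd
    have hME : M ∈ E := E.min'_mem hEne
    set D := E.erase M with hDd
    have hDcard : D.card = p := by
      rw [hDd, Finset.card_erase_of_mem hME, hEcard]
      omega
    have hDne : D.Nonempty := Finset.card_pos.mp (by omega)
    set m := D.min' hDne with hmd
    have hmD : m ∈ D := D.min'_mem hDne
    have hmE : m ∈ E := Finset.mem_of_mem_erase hmD
    have hmM : M < m := by
      have h1 := E.min'_le m hmE
      have h2 : m ≠ M := Finset.ne_of_mem_erase hmD
      omega
    have hM1 : 1 ≤ M := by have := hEsub hME; rw [Finset.mem_Icc] at this; omega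
    have hDsub : D ⊆ Finset.Icc 1 n := fun x hx => hEsub (Finset.mem_of_mem_erase hx)
    refine ⟨(D, (M : ℤ) - m), ?_, ?_⟩
    · rw [Finset.mem_filter, mem_TT']
      have h1lem : ∀ x ∈ D, 1 ≤ x ∧ x ≤ n := by
        intro x hx; have := hDsub hx; rw [Finset.mem_Icc] at this; omega
      refine ⟨⟨⟨hDsub, hDcard⟩, ⟨?_, by omega⟩, ?_⟩, by simp; omega⟩
      · simp only
        have := h1lem m hmD
        omega
      · intro x hx
        have h1 := h1lem x hx
        have h2 := D.min'_le x hx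
        simp only
        omega
    · show insert (((D.min' hDne : ℤ) + ((M : ℤ) - (m : ℤ))).toNat) D = E
      have h3 : ((m : ℤ) + ((M : ℤ) - m)).toNat = M := by omega
      rw [← hmd, h3, hDd, Finset.insert_erase hME]

lemma card_TT (n p : ℕ) (hp : 2 ≤ p) (hn : p ≤ n) :
    (TT n p).card = n.choose p + 2 * n.choose (p + 1) := by
  classical
  have hsplit : TT n p = (TT n p).filter (fun Dk => Dk.2 = 0) ∪
      (TT n p).filter (fun Dk => 0 < Dk.2) ∪ (TT n p).filter (fun Dk => Dk.2 < 0) := by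
    ext Dk
    simp only [Finset.mem_union, Finset.mem_filter]
    constructor
    · intro h; rcases lt_trichotomy Dk.2 0 with h'|h'|h'
      · right; exact ⟨h, h'⟩
      · left; left; exact ⟨h, h'⟩
      · left; right; exact ⟨h, h'⟩
    · rintro ((⟨h,_⟩|⟨h,_⟩)|⟨h,_⟩) <;> exact h
  rw [hsplit, Finset.card_union_of_disjoint, Finset.card_union_of_disjoint,
    card_T0 n p hp hn, card_Tp n p hp hn, card_Tm n p hp hn]
  · ring
  · simp only [Finset.disjoint_left, Finset.mem_filter]
    rintro Dk ⟨_, h1⟩ ⟨_, h2⟩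
    omega
  · simp only [Finset.disjoint_left, Finset.mem_union, Finset.mem_filter]
    rintro Dk (⟨_, h1⟩ | ⟨_, h1⟩) ⟨_, h2⟩ <;> omega

lemma card_image_TT (n p : ℕ) (hp : 2 ≤ p) :
    ((TT n p).image (fun Dk => phi Dk.2 Dk.1)).card = (TT n p).card := by
  apply Finset.card_image_of_injOn
  rintro ⟨D1, k1⟩ h1 ⟨D2, k2⟩ h2 heq
  rw [Finset.mem_coe, mem_TT] at h1 h2
  simp only at heq
  have hD : D1 = D2 := by
    rw [← image_fst_phi k1 D1, ← image_fst_phi k2 D2, heq]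
  subst hD
  obtain ⟨⟨hsub, hcard⟩, _, hbd1⟩ := h1
  obtain ⟨_, _, hbd2⟩ := h2
  have hne : D1.Nonempty := Finset.card_pos.mp (by omega)
  obtain ⟨x, hx⟩ := hne
  have m1 : (x, ((x : ℤ) + k1).toNat) ∈ phi k1 D1 := mem_phi.mpr ⟨hx, rfl⟩
  rw [heq, mem_phi] at m1
  have b1 := hbd1 x hx
  have b2 := hbd2 x hx
  simp only [Prod.mk.injEq]
  exact ⟨trivial, by omega⟩

theorem count_order_preserving_partial_isometries_height_p (n p : ℕ) (hp : 2 ≤ p) (hn : p ≤ n) :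
    ({G : Finset (ℕ × ℕ) | IsPartialIsometryGraph n G ∧ IsOrderPreservingGraph G ∧
      (G.image Prod.fst).card = p}.ncard : ℚ) =
    ((2 * (n : ℚ) - (p : ℚ) + 1) / ((p : ℚ) + 1)) * (n.choose p : ℚ) := by
  rw [setEq n p hp, Set.ncard_coe_finset, card_image_TT n p hp, card_TT n p hp hn]
  have key : ((n.choose (p + 1) : ℚ)) * ((p : ℚ) + 1) = (n.choose p : ℚ) * ((n : ℚ) - (p : ℚ)) := by
    have h := Nat.choose_succ_right_eq n p
    have : ((n.choose (p + 1) * (p + 1) : ℕ) : ℚ) = ((n.choose p * (n - p) : ℕ) : ℚ) := by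
      exact_mod_cast congrArg (Nat.cast : ℕ → ℚ) h
    push_cast [Nat.cast_sub hn] at this
    linarith [this]
  have hp1 : ((p : ℚ) + 1) ≠ 0 := by positivity
  field_simp
  push_cast
  ring_nf
  ring_nf at key
  linarith [key]
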